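/- arXiv:0803.2318 — 4 statements merged into one kernel-verified Lean document; each statement's English description precedes it below -/
import Mathlib

section
/- Let k, m² ∈ ℂ be parameters and set H = (1/2)(p₂² − p₁²) + (k/2)(q₂² − q₁²) − (m²/12)(q₁⁴ − 6q₁²q₂² + q₂⁴) and I = p₁p₂ + (1/3)(m²(q₂² − q₁²) − 3k)·q₁q₂, both regarded as polynomials in ℂ[q₁, q₂, p₁, p₂]. Then {H, I} = 0, i.e. I is a first integral of the Hamiltonian system generated by H (this is integrable case (1) of the conformally coupled scalar field, where Λ = λ and m² = −3Λ). -/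
open MvPolynomial

/-- Canonical Poisson bracket on ℂ[q₁, q₂, p₁, p₂], with variables
q₁ = X 0, q₂ = X 1, p₁ = X 2, p₂ = X 3. -/
noncomputable def poissonBracket (F G : MvPolynomial (Fin 4) ℂ) : MvPolynomial (Fin 4) ℂ :=
  pderiv 0 F * pderiv 2 G + pderiv 1 F * pderiv 3 G
    - pderiv 2 F * pderiv 0 G - pderiv 3 F * pderiv 1 G

lemma pderiv_ofNat (i : Fin 4) (n : ℕ) [n.AtLeastTwo] :
    pderiv i (OfNat.ofNat n : MvPolynomial (Fin 4) ℂ) = 0 := by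
  rw [← map_ofNat (C : ℂ →+* MvPolynomial (Fin 4) ℂ) n, pderiv_C]

set_option maxHeartbeats 1000000 in
/-- Integrable case (1) of the conformally coupled scalar field: `I` is a first
integral of the Hamiltonian system generated by `H`. -/
theorem stmt_0 (k m2 : ℂ)
    (H I : MvPolynomial (Fin 4) ℂ)
    (hH : H = C (1/2) * ((X 3)^2 - (X 2)^2) + C (k/2) * ((X 1)^2 - (X 0)^2)
      - C (m2/12) * ((X 0)^4 - 6 * (X 0)^2 * (X 1)^2 + (X 1)^4))
    (hI : I = X 2 * X 3
      + C (1/3) * (C m2 * ((X 1)^2 - (X 0)^2) - C (3*k)) * (X 0 * X 1)) :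
    poissonBracket H I = 0 := by
  subst hH hI
  rw [show (6 : MvPolynomial (Fin 4) ℂ) = C 6 from (map_ofNat (C : ℂ →+* MvPolynomial (Fin 4) ℂ) 6).symm]
  simp only [poissonBracket, map_add, map_sub, map_mul, Derivation.leibniz, pderiv_X_self,
    pderiv_C, map_pow, Derivation.leibniz_pow, pderiv_ofNat,
    pderiv_X_of_ne (show (0:Fin 4) ≠ 1 by decide), pderiv_X_of_ne (show (0:Fin 4) ≠ 2 by decide),
    pderiv_X_of_ne (show (0:Fin 4) ≠ 3 by decide), pderiv_X_of_ne (show (1:Fin 4) ≠ 0 by decide),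
    pderiv_X_of_ne (show (1:Fin 4) ≠ 2 by decide), pderiv_X_of_ne (show (1:Fin 4) ≠ 3 by decide),
    pderiv_X_of_ne (show (2:Fin 4) ≠ 0 by decide), pderiv_X_of_ne (show (2:Fin 4) ≠ 1 by decide),
    pderiv_X_of_ne (show (2:Fin 4) ≠ 3 by decide), pderiv_X_of_ne (show (3:Fin 4) ≠ 0 by decide),
    pderiv_X_of_ne (show (3:Fin 4) ≠ 1 by decide), pderiv_X_of_ne (show (3:Fin 4) ≠ 2 by decide),
    mul_zero, zero_mul, mul_one, one_mul, add_zero, zero_add, sub_zero, zero_sub, neg_zero,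
    smul_eq_mul]
  apply MvPolynomial.funext
  intro x
  simp only [map_add, map_sub, map_mul, map_pow, eval_C, eval_X, map_ofNat, map_neg, map_zero,
    map_one]
  simp
  ring
end

section
/- Let k, m² ∈ ℂ be parameters and set H = (1/2)(p₂² − p₁²) + (k/2)(q₂² − q₁²) − (m²/4)(q₂² − q₁²)² and I = q₁p₂ + q₂p₁, both regarded as polynomials in ℂ[q₁, q₂, p₁, p₂]. Then {H, I} = 0, i.e. I is a first integral of the Hamiltonian system generated by H (this is integrable case (2) of the conformally coupled scalar field, where Λ = λ and m² = −Λ). -/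
open MvPolynomial

set_option maxHeartbeats 1000000 in
/-- Integrable case (2) of the conformally coupled scalar field: `I` is a first
integral of the Hamiltonian system generated by `H`. -/
theorem stmt_1 (k m2 : ℂ)
    (H I : MvPolynomial (Fin 4) ℂ)
    (hH : H = C (1/2) * ((X 3)^2 - (X 2)^2) + C (k/2) * ((X 1)^2 - (X 0)^2)
      - C (m2/4) * ((X 1)^2 - (X 0)^2)^2)
    (hI : I = X 0 * X 3 + X 1 * X 2) :
    poissonBracket H I = 0 := by
  subst hH hI
  simp only [poissonBracket, map_add, map_sub, map_mul, pderiv_X, pderiv_C, pderiv_pow]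
  simp [Pi.single_apply]
  norm_num
  ring
end

section
/- Let m² ∈ ℂ be a parameter and set H = (1/2)(p₂² − p₁²) − (m²/24)(16q₁⁴ − 12q₁²q₂² + q₂⁴) and I = (q₁p₂ + q₂p₁)p₂ + (m²/6)q₁q₂²(q₂² − 2q₁²), both regarded as polynomials in ℂ[q₁, q₂, p₁, p₂]. Then {H, I} = 0, i.e. I is a first integral of the Hamiltonian system generated by H (this is integrable case (3) of the conformally coupled scalar field, where k = 0, Λ = 16λ and m² = −6λ). -/
open MvPolynomial

lemma pd16 (i : Fin 4) : pderiv i (16 : MvPolynomial (Fin 4) ℂ) = 0 := by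
  rw [show (16 : MvPolynomial (Fin 4) ℂ) = C 16 from (map_ofNat C 16).symm, pderiv_C]

lemma pd12 (i : Fin 4) : pderiv i (12 : MvPolynomial (Fin 4) ℂ) = 0 := by
  rw [show (12 : MvPolynomial (Fin 4) ℂ) = C 12 from (map_ofNat C 12).symm, pderiv_C]

lemma pd2 (i : Fin 4) : pderiv i (2 : MvPolynomial (Fin 4) ℂ) = 0 := by
  rw [show (2 : MvPolynomial (Fin 4) ℂ) = C 2 from (map_ofNat C 2).symm, pderiv_C]

set_option maxHeartbeats 1600000 in
/-- Integrable case (3) of the conformally coupled scalar field (k = 0,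
Λ = 16λ, m² = −6λ): `I` is a first integral of the Hamiltonian system
generated by `H`. -/
theorem stmt_2 (m2 : ℂ)
    (H I : MvPolynomial (Fin 4) ℂ)
    (hH : H = C (1/2) * ((X 3)^2 - (X 2)^2)
      - C (m2/24) * (16 * (X 0)^4 - 12 * (X 0)^2 * (X 1)^2 + (X 1)^4))
    (hI : I = (X 0 * X 3 + X 1 * X 2) * X 3
      + C (m2/6) * X 0 * (X 1)^2 * ((X 1)^2 - 2 * (X 0)^2)) :
    poissonBracket H I = 0 := by
  subst hH hI
  simp only [poissonBracket, map_add, map_sub, pderiv_mul, pderiv_pow, pderiv_X, pderiv_C,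
    pd16, pd12, pd2, Pi.single_apply]
  norm_num [Fin.ext_iff]
  simp (config := { decide := true })
  have c16 : (16 : MvPolynomial (Fin 4) ℂ) = C 16 := (map_ofNat C 16).symm
  have c8 : (8 : MvPolynomial (Fin 4) ℂ) = C 8 := (map_ofNat C 8).symm
  have c24 : (24 : MvPolynomial (Fin 4) ℂ) = C 24 := (map_ofNat C 24).symm
  have c12 : (12 : MvPolynomial (Fin 4) ℂ) = C 12 := (map_ofNat C 12).symm
  have c4 : (4 : MvPolynomial (Fin 4) ℂ) = C 4 := (map_ofNat C 4).symm
  have c2 : (2 : MvPolynomial (Fin 4) ℂ) = C 2 := (map_ofNat C 2).symm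
  have h1 : (C (m2/24) : MvPolynomial (Fin 4) ℂ) * 16
      = C 2⁻¹ * C (m2/6) * 8 := by
    rw [c16, c8]; simp only [← C_mul]; exact congrArg C (by ring)
  have h2 : (C (m2/24) : MvPolynomial (Fin 4) ℂ) * 24
      = C 2⁻¹ * C (m2/6) * 12 := by
    rw [c24, c12]; simp only [← C_mul]; exact congrArg C (by ring)
  have h3 : (C (m2/24) : MvPolynomial (Fin 4) ℂ) * 4
      = C 2⁻¹ * C (m2/6) * 2 := by
    rw [c4, c2]; simp only [← C_mul]; exact congrArg C (by ring)
  linear_combination (X 0 * X 1^3 * X 3 - X 0^3 * X 1 * X 3) * h1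
    + (X 0^2 * X 1^2 * X 2) * h2 - (X 1^4 * X 2) * h3
end

section
/- Let l₁, l₂, l₃ be integers with l₁ ≥ 2, l₂ ≥ 2, l₃ ≥ 0 and l₃ ≠ 1, and set λᵢ = lᵢ(lᵢ + 1)/2 ∈ ℚ for i = 1, 2, 3. Then 1/(λ₁ − 1) + 1/(λ₂ − 1) + 2/(λ₃ − 1) = −1 holds if and only if l₁ = l₂ = 2 and l₃ = 0. -/
lemma denom_ge (l : ℤ) (hl : 2 ≤ l) : (2:ℚ) ≤ (l : ℚ) * (l + 1) / 2 - 1 := by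
  have : (2:ℚ) ≤ (l:ℚ) := by exact_mod_cast hl
  nlinarith

lemma l_eq_two (l : ℤ) (hl : 2 ≤ l) (h : (l : ℚ) * (l + 1) / 2 - 1 = 2) : l = 2 := by
  have h6 : (l:ℚ) * (l + 1) = 6 := by linarith
  have h6' : l * (l + 1) = 6 := by exact_mod_cast h6
  have : (l - 2) * (l + 3) = 0 := by nlinarith
  rcases mul_eq_zero.mp this with h | h <;> omega

/-- On the zero-energy level with k² = 1, the necessary integrability
conditions λᵢ = lᵢ(lᵢ+1)/2 together with the relation
1/(λ₁−1) + 1/(λ₂−1) + 2/(λ₃−1) = −1 single out l₁ = l₂ = 2, l₃ = 0. -/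
theorem stmt_13 (l1 l2 l3 : ℤ) (h1 : 2 ≤ l1) (h2 : 2 ≤ l2) (h3 : 0 ≤ l3)
    (h3' : l3 ≠ 1) :
    (1 / ((l1 : ℚ) * (l1 + 1) / 2 - 1) + 1 / ((l2 : ℚ) * (l2 + 1) / 2 - 1)
        + 2 / ((l3 : ℚ) * (l3 + 1) / 2 - 1) = -1)
      ↔ (l1 = 2 ∧ l2 = 2 ∧ l3 = 0) := by
  have hA := denom_ge l1 h1
  have hB := denom_ge l2 h2
  have hA0 : (0:ℚ) < (l1 : ℚ) * (l1 + 1) / 2 - 1 := by linarith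
  have hB0 : (0:ℚ) < (l2 : ℚ) * (l2 + 1) / 2 - 1 := by linarith
  constructor
  · intro heq
    rcases eq_or_lt_of_le h3 with h30 | h32
    · -- l3 = 0
      subst h30
      norm_num at heq
      -- heq : 1/A + 1/B = 1
      set A := (l1 : ℚ) * (l1 + 1) / 2 - 1 with hAdef
      set B := (l2 : ℚ) * (l2 + 1) / 2 - 1 with hBdef
      have hsum : B + A = A * B := by
        field_simp at heq
        linarith
      have hprod : (A - 1) * (B - 1) = 1 := by nlinarith
      have hA2 : A = 2 := by nlinarith
      have hB2 : B = 2 := by nlinarith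
      exact ⟨l_eq_two l1 h1 hA2, l_eq_two l2 h2 hB2, rfl⟩
    · -- l3 ≥ 1, so l3 ≥ 2
      have h32' : 2 ≤ l3 := by omega
      have hC := denom_ge l3 h32'
      have hC0 : (0:ℚ) < (l3 : ℚ) * (l3 + 1) / 2 - 1 := by linarith
      have p1 : 0 < 1 / ((l1 : ℚ) * (l1 + 1) / 2 - 1) := by positivity
      have p2 : 0 < 1 / ((l2 : ℚ) * (l2 + 1) / 2 - 1) := by positivity
      have p3 : 0 < 2 / ((l3 : ℚ) * (l3 + 1) / 2 - 1) := by positivity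
      linarith
  · rintro ⟨rfl, rfl, rfl⟩
    norm_num
end
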